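/- Let G be a nontrivial finite group. Then there exists a function g : G → G such that for every affine map A of G (a map x ↦ a·φ(x) with a ∈ G, φ ∈ End(G)), the number of x ∈ G with g(x) = A(x) is at most (1/log 2 + 2/log|G|)·(log|G|)². In particular, the minimum affine approximability of G is o(|G|) as |G| → ∞. -/

import Mathlib

open Finset in
private lemma exists_gen' (G : Type*) [Group G] [Fintype G] :
    ∃ S : Finset G, Subgroup.closure (S : Set G) = ⊤ ∧
      2 ^ S.card ≤ Fintype.card G := by
  classical
  suffices h : ∀ d (H : Subgroup G), Fintype.card G ≤ Nat.card H + d →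
      ∃ S : Finset G, Subgroup.closure (S : Set G) ⊔ H = ⊤ ∧
        2 ^ S.card * Nat.card H ≤ Fintype.card G by
    obtain ⟨S, h1, h2⟩ := h (Fintype.card G) ⊥ (by omega)
    refine ⟨S, by simpa using h1, by simpa using h2⟩
  intro d
  induction d with
  | zero =>
    intro H hH
    have hle : Nat.card H ≤ Fintype.card G := by
      rw [← Nat.card_eq_fintype_card]
      exact Nat.le_of_dvd Nat.card_pos (Subgroup.card_subgroup_dvd_card H)
    have hG : Nat.card G = Fintype.card G := Nat.card_eq_fintype_card
    have : H = ⊤ := Subgroup.eq_top_of_card_eq H (by omega)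
    subst this
    refine ⟨∅, by simp, ?_⟩
    rw [card_empty, pow_zero, one_mul, Subgroup.card_top, Nat.card_eq_fintype_card]
  | succ d ih =>
    intro H hH
    by_cases htop : H = ⊤
    · subst htop
      refine ⟨∅, by simp, ?_⟩
      rw [card_empty, pow_zero, one_mul, Subgroup.card_top, Nat.card_eq_fintype_card]
    · obtain ⟨x, hx⟩ : ∃ x, x ∉ H := by
        by_contra hc
        push_neg at hc
        exact htop ((Subgroup.eq_top_iff' H).2 hc)
      set H' := Subgroup.closure {x} ⊔ H with hH'
      have hxH' : x ∈ H' := by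
        apply SetLike.le_def.1 le_sup_left
        exact Subgroup.subset_closure (Set.mem_singleton x)
      have hlt : H < H' := lt_of_le_of_ne le_sup_right (fun h => hx (h ▸ hxH'))
      have hcardlt : Nat.card H < Nat.card H' := by
        have h1 : ((H : Set G)).ncard < ((H' : Set G)).ncard := by
          refine Set.ncard_lt_ncard ?_ (Set.toFinite _)
          rw [Set.ssubset_iff_of_subset (fun y hy => hlt.le hy)]
          exact ⟨x, hxH', hx⟩
        rw [← Nat.card_coe_set_eq, ← Nat.card_coe_set_eq] at h1
        exact h1
      have hdvd : Nat.card H ∣ Nat.card H' := Subgroup.card_dvd_of_le hlt.le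
      have h2card : 2 * Nat.card H ≤ Nat.card H' := by
        obtain ⟨c, hc⟩ := hdvd
        have hpos : 0 < Nat.card H := Nat.card_pos
        have hpos' : 0 < Nat.card H' := Nat.card_pos
        rcases c with _ | _ | c
        · simp only [Nat.mul_zero] at hc; omega
        · simp only [Nat.zero_add, Nat.mul_one] at hc; omega
        · rw [hc]
          calc 2 * Nat.card H = Nat.card H * 2 := by ring
            _ ≤ Nat.card H * (c + 1 + 1) := Nat.mul_le_mul_left _ (by omega)
      obtain ⟨S', hS1, hS2⟩ := ih H' (by omega)
      refine ⟨insert x S', ?_, ?_⟩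
      · rw [coe_insert, Set.insert_eq, Subgroup.closure_union,
          sup_comm (Subgroup.closure {x}) _, sup_assoc]
        exact hS1
      · calc 2 ^ (insert x S').card * Nat.card H
            ≤ 2 ^ (S'.card + 1) * Nat.card H :=
              Nat.mul_le_mul_right _ (Nat.pow_le_pow_right (by norm_num) (card_insert_le _ _))
          _ = 2 ^ S'.card * (2 * Nat.card H) := by ring
          _ ≤ 2 ^ S'.card * Nat.card H' := Nat.mul_le_mul_left _ h2card
          _ ≤ Fintype.card G := hS2

private lemma card_hom_le' (G : Type*) [Group G] [Fintype G] :
    Nat.card (G →* G) ≤ Fintype.card G ^ Nat.log 2 (Fintype.card G) := by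
  classical
  obtain ⟨S, hS, hScard⟩ := exists_gen' G
  have hcard : S.card ≤ Nat.log 2 (Fintype.card G) :=
    (Nat.le_log_iff_pow_le (by norm_num) Fintype.card_ne_zero).2 hScard
  have hinj : Function.Injective (fun (f : G →* G) (s : S) => f s) := by
    intro f ψ h
    refine MonoidHom.eq_of_eqOn_dense hS ?_
    intro y hy
    exact congrFun h ⟨y, hy⟩
  haveI : Finite (G →* G) := Finite.of_injective _ DFunLike.coe_injective (β := G → G)
  calc Nat.card (G →* G) ≤ Nat.card (S → G) := Nat.card_le_card_of_injective _ hinj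
    _ = Fintype.card G ^ S.card := by
        rw [Nat.card_eq_fintype_card, Fintype.card_fun, Fintype.card_coe]
    _ ≤ Fintype.card G ^ Nat.log 2 (Fintype.card G) :=
        Nat.pow_le_pow_right Fintype.card_pos hcard

open Nat in
private lemma pow_self_le_factorial_mul_exp (t : ℕ) :
    (t : ℝ) ^ t ≤ (t ! : ℝ) * Real.exp t := by
  have h := Real.sum_le_exp_of_nonneg (x := (t : ℝ)) (by positivity) (t + 1)
  have h2 : (t : ℝ) ^ t / t ! ≤ ∑ i ∈ Finset.range (t + 1), (t : ℝ) ^ i / i ! :=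
    Finset.single_le_sum (f := fun i => (t : ℝ) ^ i / i !) (fun i _ => by positivity)
      (Finset.self_mem_range_succ t)
  have h3 := h2.trans h
  rw [div_le_iff₀ (by positivity)] at h3
  nlinarith
open Nat in
private lemma key_real (n t : ℕ) (hn : 8 ≤ n)
    (ht : (1 / Real.log 2 + 2 / Real.log n) * Real.log n ^ 2 < t) :
    n ^ (1 + Nat.log 2 n) < t ! := by
  have hn0 : (0:ℝ) < n := by exact_mod_cast (show 0 < n by omega)
  set L := Real.log n with hLdef
  set l := Real.log 2 with hldef
  have hl : (0.6931471803 : ℝ) < l := Real.log_two_gt_d9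
  have hl0 : (0:ℝ) < l := by linarith
  have hL : 3 * l ≤ L := by
    have h8 : Real.log 8 ≤ L := Real.log_le_log (by norm_num) (by exact_mod_cast hn)
    rw [show (8:ℝ) = 2 ^ (3:ℕ) by norm_num, Real.log_pow] at h8
    push_cast at h8
    linarith
  have hL0 : (0:ℝ) < L := by linarith
  set m := Nat.log 2 n with hmdef
  have hm : (m : ℝ) * l ≤ L := by
    have h1 : ((2:ℕ) : ℝ) ^ m ≤ (n : ℝ) := by
      exact_mod_cast Nat.pow_log_le_self 2 (show n ≠ 0 by omega)
    have h2 : Real.log ((2:ℝ) ^ m) ≤ L := Real.log_le_log (by positivity) (by exact_mod_cast h1)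
    rwa [Real.log_pow] at h2
  have hk : (1 / l + 2 / L) * L ^ 2 = L ^ 2 / l + 2 * L := by field_simp
  rw [hk] at ht
  have h3L : 3 * L ≤ L ^ 2 / l := by
    rw [le_div_iff₀ hl0]; nlinarith
  have ht10 : (10 : ℝ) ≤ t := by nlinarith
  have ht0 : (0:ℝ) < t := by linarith
  have hlogt : 2 ≤ Real.log t := by
    rw [Real.le_log_iff_exp_le ht0]
    have he := Real.exp_one_lt_d9
    have h2 : Real.exp 2 = Real.exp 1 ^ 2 := by
      rw [← Real.exp_nat_mul]; norm_num
    nlinarith [Real.exp_pos 1]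
  have hmL : (m : ℝ) * L ≤ (L ^ 2) / l := by
    rw [le_div_iff₀ hl0]
    calc (m:ℝ) * L * l = ((m:ℝ) * l) * L := by ring
      _ ≤ L * L := by nlinarith
      _ = L ^ 2 := by ring
  -- chain
  have h1 : ((n : ℝ)) ^ (1 + m) < Real.exp t := by
    have : (n:ℝ) ^ (1 + m) = Real.exp ((1 + m) * L) := by
      rw [← Real.exp_log hn0, ← Real.exp_nat_mul]
      push_cast
      ring_nf
      rfl
    rw [this]
    apply Real.exp_lt_exp.2
    nlinarith
  have h2 : Real.exp t ≤ (t ! : ℝ) := by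
    have hp := pow_self_le_factorial_mul_exp t
    have htt : (t:ℝ) ^ t = Real.exp (t * Real.log t) := by
      rw [← Real.rpow_natCast (t:ℝ) t, Real.rpow_def_of_pos ht0, mul_comm]
    have hexp2 : Real.exp (2 * (t:ℝ)) ≤ (t ! : ℝ) * Real.exp t := by
      refine le_trans ?_ hp
      rw [htt]
      apply Real.exp_le_exp.2
      nlinarith
    rw [two_mul, Real.exp_add] at hexp2
    have hepos := Real.exp_pos (t : ℝ)
    nlinarith
  have : ((n ^ (1 + m) : ℕ) : ℝ) < ((t !) : ℝ) := by
    rw [Nat.cast_pow]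
    exact lt_of_lt_of_le h1 h2
  exact_mod_cast this
open Finset Nat in
private lemma counting' {G : Type*} [Group G] [Fintype G] (t : ℕ)
    (hfac : Fintype.card G ^ (1 + Nat.log 2 (Fintype.card G)) < t !) :
    ∃ g : G → G, ∀ (a : G) (f : G →* G),
      {x | g x = a * f x}.ncard < t := by
  classical
  suffices h : ∃ g : G → G, ∀ (a : G) (f : G →* G),
      (Finset.univ.filter fun x => g x = a * f x).card < t by
    obtain ⟨g, hg⟩ := h
    refine ⟨g, fun a f => ?_⟩
    rw [Set.ncard_eq_toFinset_card', Set.toFinset_setOf]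
    exact hg a f
  set n := Fintype.card G with hn
  by_cases htn : n < t
  · refine ⟨id, fun a f => lt_of_le_of_lt (le_trans (card_filter_le _ _) ?_) htn⟩
    rw [Finset.card_univ]
  push_neg at htn
  haveI : Fintype (G →* G) := Fintype.ofInjective (fun f : G →* G => (f : G → G))
    DFunLike.coe_injective
  set Bad : Finset (G → G) := Finset.univ.filter
      (fun g => ∃ p : G × (G →* G), t ≤ (Finset.univ.filter fun x => g x = p.1 * p.2 x).card)
    with hBad
  have hsub : Bad ⊆ Finset.univ.biUnion (fun p : G × (G →* G) =>
      ((Finset.univ : Finset G).powersetCard t).biUnion (fun S =>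
        Finset.univ.filter fun g : G → G => ∀ x ∈ S, g x = p.1 * p.2 x)) := by
    intro g hg
    rw [hBad, mem_filter] at hg
    obtain ⟨-, p, hp⟩ := hg
    obtain ⟨S, hSsub, hScard⟩ := exists_subset_card_eq hp
    refine mem_biUnion.2 ⟨p, mem_univ _, mem_biUnion.2 ⟨S, ?_, ?_⟩⟩
    · exact mem_powersetCard.2 ⟨subset_univ _, hScard⟩
    · refine mem_filter.2 ⟨mem_univ _, fun x hx => ?_⟩
      exact (mem_filter.1 (hSsub hx)).2
  have hone : ∀ (p : G × (G →* G)) (S : Finset G), S ∈ (Finset.univ : Finset G).powersetCard t →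
      (Finset.univ.filter fun g : G → G => ∀ x ∈ S, g x = p.1 * p.2 x).card ≤ n ^ (n - t) := by
    intro p S hS
    obtain ⟨-, hScard⟩ := mem_powersetCard.1 hS
    have hinj : Set.InjOn (fun (g : G → G) (x : ↥(Sᶜ : Finset G)) => g x.1)
        ↑(Finset.univ.filter fun g : G → G => ∀ x ∈ S, g x = p.1 * p.2 x) := by
      intro g1 hg1 g2 hg2 heq
      simp only [coe_filter, Set.mem_setOf_eq] at hg1 hg2
      funext x
      by_cases hxS : x ∈ S
      · rw [hg1.2 x hxS, hg2.2 x hxS]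
      · exact congrFun heq ⟨x, Finset.mem_compl.2 hxS⟩
    calc (Finset.univ.filter fun g : G → G => ∀ x ∈ S, g x = p.1 * p.2 x).card
        ≤ (Finset.univ : Finset (↥(Sᶜ : Finset G) → G)).card :=
          Finset.card_le_card_of_injOn _ (fun g _ => mem_univ _) hinj
      _ = n ^ (n - t) := by
          rw [Finset.card_univ, Fintype.card_fun, Fintype.card_coe, card_compl, hScard]
  have hBadcard : Bad.card ≤ n ^ (1 + Nat.log 2 n) * (n.choose t * n ^ (n - t)) := by
    calc Bad.card ≤ _ := card_le_card hsub
      _ ≤ ∑ p ∈ (Finset.univ : Finset (G × (G →* G))), (((Finset.univ : Finset G).powersetCard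
            t).biUnion (fun S => Finset.univ.filter fun g : G → G =>
              ∀ x ∈ S, g x = p.1 * p.2 x)).card := card_biUnion_le
      _ ≤ ∑ p ∈ (Finset.univ : Finset (G × (G →* G))),
            (n.choose t * n ^ (n - t)) := by
          refine Finset.sum_le_sum fun p _ => ?_
          calc (((Finset.univ : Finset G).powersetCard t).biUnion _).card
              ≤ ∑ S ∈ (Finset.univ : Finset G).powersetCard t,
                  (Finset.univ.filter fun g : G → G => ∀ x ∈ S, g x = p.1 * p.2 x).card :=
                card_biUnion_le
            _ ≤ ∑ _S ∈ (Finset.univ : Finset G).powersetCard t, n ^ (n - t) :=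
                Finset.sum_le_sum (hone p)
            _ = n.choose t * n ^ (n - t) := by
                rw [Finset.sum_const, card_powersetCard, Finset.card_univ, smul_eq_mul]
      _ = Fintype.card (G × (G →* G)) * (n.choose t * n ^ (n - t)) := by
          rw [Finset.sum_const, Finset.card_univ, smul_eq_mul]
      _ ≤ n ^ (1 + Nat.log 2 n) * (n.choose t * n ^ (n - t)) := by
          refine Nat.mul_le_mul_right _ ?_
          rw [Fintype.card_prod, pow_add, pow_one]
          refine Nat.mul_le_mul_left _ ?_
          have := card_hom_le' G
          rwa [Nat.card_eq_fintype_card] at this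
  have hfinal : Bad.card < n ^ n := by
    have hc1 : t ! * n.choose t ≤ n ^ t := by
      rw [← Nat.descFactorial_eq_factorial_mul_choose]
      exact Nat.descFactorial_le_pow _ _
    have hchoosepos : 0 < n.choose t := Nat.choose_pos htn
    have hp1 : n ^ (1 + Nat.log 2 n) * (n.choose t * n ^ (n - t))
        < t ! * (n.choose t * n ^ (n - t)) := by
      refine mul_lt_mul_of_pos_right hfac ?_
      exact Nat.mul_pos hchoosepos (Nat.pow_pos Fintype.card_pos)
    have hp2 : t ! * (n.choose t * n ^ (n - t)) ≤ n ^ n := by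
      calc t ! * (n.choose t * n ^ (n - t)) = (t ! * n.choose t) * n ^ (n - t) := by ring
        _ ≤ n ^ t * n ^ (n - t) := Nat.mul_le_mul_right _ hc1
        _ = n ^ n := by rw [← pow_add]; congr 1; omega
    omega
  have hex : ∃ g : G → G, g ∉ Bad := by
    by_contra hc
    push_neg at hc
    have : (Finset.univ : Finset (G → G)).card ≤ Bad.card :=
      card_le_card fun g _ => hc g
    rw [Finset.card_univ, Fintype.card_fun] at this
    exact absurd (lt_of_lt_of_le hfinal this) (lt_irrefl _)
  obtain ⟨g, hg⟩ := hex
  refine ⟨g, fun a f => ?_⟩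
  by_contra hcon
  push_neg at hcon
  exact hg (by rw [hBad, mem_filter]; exact ⟨mem_univ _, ⟨(a, f), hcon⟩⟩)
private lemma small_help {c LB : ℝ} (hLB : 0 < LB) (hL : LB ≤ Real.log c)
    (hnum : c ≤ LB ^ 2 / 0.6931471808 + 2 * LB) :
    c ≤ (1 / Real.log 2 + 2 / Real.log c) * Real.log c ^ 2 := by
  have hl1 : (0.6931471803 : ℝ) < Real.log 2 := Real.log_two_gt_d9
  have hl2 : Real.log 2 < 0.6931471808 := Real.log_two_lt_d9
  have hl0 : (0 : ℝ) < Real.log 2 := by linarith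
  have hL0 : (0 : ℝ) < Real.log c := lt_of_lt_of_le hLB hL
  have hk : (1 / Real.log 2 + 2 / Real.log c) * Real.log c ^ 2
      = Real.log c ^ 2 / Real.log 2 + 2 * Real.log c := by field_simp
  rw [hk]
  have hsq : LB ^ 2 ≤ Real.log c ^ 2 := by nlinarith
  have h1 : Real.log c ^ 2 / 0.6931471808 ≤ Real.log c ^ 2 / Real.log 2 :=
    div_le_div_of_nonneg_left (sq_nonneg _) hl0 hl2.le
  have h2 : LB ^ 2 / 0.6931471808 ≤ Real.log c ^ 2 / 0.6931471808 := by gcongr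
  linarith

private lemma small_case (c : ℕ) (h2 : 2 ≤ c) (h7 : c ≤ 7) :
    (c : ℝ) ≤ (1 / Real.log 2 + 2 / Real.log c) * Real.log c ^ 2 := by
  have hl1 : (0.6931471803 : ℝ) < Real.log 2 := Real.log_two_gt_d9
  have he : Real.exp 1 < 2.7182818286 := Real.exp_one_lt_d9
  have hlog3 : (1 : ℝ) ≤ Real.log 3 := by
    rw [Real.le_log_iff_exp_le (by norm_num)]
    linarith
  have hlog4 : (1.3862943606 : ℝ) ≤ Real.log 4 := by
    rw [show (4:ℝ) = 2 ^ (2:ℕ) by norm_num, Real.log_pow]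
    push_cast
    linarith
  have hlog6 : (1.6931471803 : ℝ) ≤ Real.log 6 := by
    rw [show (6:ℝ) = 2 * 3 by norm_num, Real.log_mul (by norm_num) (by norm_num)]
    linarith
  interval_cases c
  · exact small_help (LB := 0.6931471803) (by norm_num) (by push_cast; linarith) (by norm_num)
  · exact small_help (LB := 1) (by norm_num) (by push_cast; linarith) (by norm_num)
  · refine small_help (LB := 1.3862943606) (by norm_num) ?_ (by norm_num)
    push_cast
    linarith
  · refine small_help (LB := 1.3862943606) (by norm_num) ?_ (by norm_num)
    push_cast
    refine le_trans hlog4 (Real.log_le_log (by norm_num) (by norm_num))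
  · refine small_help (LB := 1.6931471803) (by norm_num) ?_ (by norm_num)
    push_cast
    linarith
  · refine small_help (LB := 1.6931471803) (by norm_num) ?_ (by norm_num)
    push_cast
    refine le_trans hlog6 (Real.log_le_log (by norm_num) (by norm_num))

theorem stmt_19 {G : Type*} [Group G] [Fintype G] [Nontrivial G] :
    ∃ g : G → G, ∀ (a : G) (φ : G →* G),
      (Set.ncard {x | g x = a * φ x} : ℝ) ≤
        (1 / Real.log 2 + 2 / Real.log (Fintype.card G)) *
          Real.log (Fintype.card G) ^ 2 := by
  classical
  have hn2 : 1 < Fintype.card G := Fintype.one_lt_card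
  set n := Fintype.card G with hn
  have hl0 : (0 : ℝ) < Real.log 2 := Real.log_pos (by norm_num)
  have hLn : (0 : ℝ) < Real.log n := Real.log_pos (by exact_mod_cast hn2)
  by_cases h8 : 8 ≤ n
  · set k := (1 / Real.log 2 + 2 / Real.log n) * Real.log n ^ 2 with hk
    have hkpos : 0 ≤ k := by
      rw [hk]
      have := le_of_lt (div_pos one_pos hl0)
      have := le_of_lt (div_pos (by norm_num : (0:ℝ) < 2) hLn)
      nlinarith [sq_nonneg (Real.log n)]
    have hkt : k < ((⌊k⌋₊ + 1 : ℕ) : ℝ) := by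
      push_cast
      exact Nat.lt_floor_add_one k
    have hfac := key_real n (⌊k⌋₊ + 1) h8 hkt
    obtain ⟨g, hg⟩ := counting' (G := G) (⌊k⌋₊ + 1) hfac
    refine ⟨g, fun a f => ?_⟩
    have hcard : {x | g x = a * f x}.ncard ≤ ⌊k⌋₊ := Nat.lt_succ_iff.1 (hg a f)
    calc ({x | g x = a * f x}.ncard : ℝ) ≤ (⌊k⌋₊ : ℝ) := by exact_mod_cast hcard
      _ ≤ k := Nat.floor_le hkpos
  · push_neg at h8
    refine ⟨id, fun a f => ?_⟩
    have h1 : ({x | (id : G → G) x = a * f x}).ncard ≤ n := by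
      have h := Set.ncard_le_ncard (Set.subset_univ {x | (id : G → G) x = a * f x})
        Set.finite_univ
      rwa [Set.ncard_univ, Nat.card_eq_fintype_card] at h
    have h2 : (n : ℝ) ≤ (1 / Real.log 2 + 2 / Real.log n) * Real.log n ^ 2 :=
      small_case n (by omega) (by omega)
    calc (({x | (id : G → G) x = a * f x}).ncard : ℝ) ≤ (n : ℝ) := by exact_mod_cast h1
      _ ≤ _ := h2
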